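/- Let δ ∈ 2^{-ℕ}, τ > 0, N ∈ ℕ with N ≥ 2, and let A ⊆ (δ·ℤ) ∩ [0,1] be a set with |A| ≥ δ^{-N²τ}. Then there exists a (τ, 2δ^{-1/N}, N)-tight subset A' ⊆ A of cardinality |A'| ≥ δ^{N²τ}|A|. -/

import Mathlib

open MeasureTheory Metric Set Pointwise

/-- δ is a dyadic scale: δ = 2^{-j} for some j ∈ ℕ. -/
def isDyadic (δ : ℝ) : Prop := ∃ j : ℕ, δ = 2 ^ (-(j : ℤ))

/-- The δ-grid (δ·ℤ) ∩ [0,1]. -/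
def grid (δ : ℝ) : Set ℝ := {x : ℝ | (∃ k : ℤ, x = (k : ℝ) * δ) ∧ x ∈ Set.Icc (0:ℝ) 1}

/-- δ·ℤ -/
def gridZ (δ : ℝ) : Set ℝ := {x : ℝ | ∃ k : ℤ, x = (k : ℝ) * δ}

/-- Least number of dyadic intervals of length δ needed to cover X. -/
noncomputable def covN (δ : ℝ) (X : Set ℝ) : ℕ :=
  sInf {n : ℕ | ∃ s : Finset ℤ, s.card = n ∧
    X ⊆ ⋃ k ∈ s, Set.Ico ((k : ℝ) * δ) (((k : ℝ) + 1) * δ)}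

/-- Support of a measure on ℝ. -/
def sptm (ν : Measure ℝ) : Set ℝ := {x : ℝ | ∀ ε > 0, 0 < ν (Metric.ball x ε)}

/-- The projection π_c(x,y) = x + cy. -/
def piC (c : ℝ) : ℝ × ℝ → ℝ := fun p => p.1 + c * p.2

/-- The exceptional set 𝓔(A∣B,ε): those c for which some large subset B' ⊆ B has
|A + cB'|_δ < δ^{-ε}|A|. -/
noncomputable def Eexc (δ ε : ℝ) (A B : Set ℝ) : Set ℝ :=
  {c : ℝ | ∃ B' ⊆ B, δ ^ ε * (B.ncard : ℝ) ≤ (B'.ncard : ℝ) ∧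
    (covN δ (A + c • B') : ℝ) < δ ^ (-ε) * (A.ncard : ℝ)}

/-- k-fold sumset (sumN 0 A = {0}). -/
def sumN : ℕ → Set ℝ → Set ℝ
  | 0, _ => {0}
  | (n+1), A => sumN n A + A


/-- A set A ⊆ δ·ℤ is (τ,T,N)-tight if |kA| ≤ T|kA'| for every 1 ≤ k ≤ N and every
subset A' ⊆ A with |A'| ≥ δ^τ|A|. -/
def isTight (δ τ T : ℝ) (N : ℕ) (A : Set ℝ) : Prop :=
  ∀ A' ⊆ A, δ ^ τ * (A.ncard : ℝ) ≤ (A'.ncard : ℝ) →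
    ∀ k : ℕ, 1 ≤ k → k ≤ N → ((sumN k A).ncard : ℝ) ≤ T * ((sumN k A').ncard : ℝ)

private def strip (δ : ℝ) (k : ℕ) : Set ℝ :=
  {x : ℝ | (∃ m : ℤ, x = (m : ℝ) * δ) ∧ x ∈ Set.Icc (0:ℝ) (k : ℝ)}

private lemma sumN_mono {A B : Set ℝ} (h : A ⊆ B) : ∀ k, sumN k A ⊆ sumN k B
  | 0 => subset_rfl
  | (n+1) => Set.add_subset_add (sumN_mono h n) h

private lemma sumN_nonempty {A : Set ℝ} (h : A.Nonempty) : ∀ k, (sumN k A).Nonempty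
  | 0 => ⟨0, rfl⟩
  | (n+1) => Set.Nonempty.add (sumN_nonempty h n) h

private lemma sumN_strip {δ : ℝ} {A : Set ℝ} (hA : A ⊆ strip δ 1) :
    ∀ k, sumN k A ⊆ strip δ k := by
  intro k
  induction k with
  | zero =>
      intro x hx
      simp only [sumN, Set.mem_singleton_iff] at hx
      subst hx
      exact ⟨⟨0, by simp⟩, by simp⟩
  | succ n ih =>
      intro x hx
      rw [show sumN (n+1) A = sumN n A + A from rfl, Set.mem_add] at hx
      obtain ⟨y, hy, a, ha, rfl⟩ := hx
      obtain ⟨⟨m, hm⟩, hy0, hy1⟩ := ih hy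
      obtain ⟨⟨m', hm'⟩, ha0, ha1⟩ := hA ha
      refine ⟨⟨m + m', by rw [hm, hm']; push_cast; ring⟩, add_nonneg hy0 ha0, ?_⟩
      have h1 : a ≤ 1 := by simpa using ha1
      push_cast
      linarith

private lemma strip_finite {δ : ℝ} (hδ0 : 0 < δ) (k : ℕ) : (strip δ k).Finite ∧
    (((strip δ k).ncard : ℝ) ≤ (k : ℝ)/δ + 1) := by
  set F : Finset ℝ := (Finset.Icc (0:ℤ) ⌊(k:ℝ)/δ⌋).image (fun m : ℤ => (m:ℝ)*δ) with hF
  have hsub : strip δ k ⊆ ↑F := by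
    rintro x ⟨⟨m, rfl⟩, h0, h1⟩
    simp only [hF, Finset.coe_image, Set.mem_image, Finset.mem_coe, Finset.mem_Icc]
    refine ⟨m, ⟨?_, Int.le_floor.mpr ((le_div_iff₀ hδ0).mpr h1)⟩, rfl⟩
    have : (0:ℝ) ≤ (m:ℝ) := by nlinarith
    exact_mod_cast this
  have hfin : (strip δ k).Finite := F.finite_toSet.subset hsub
  refine ⟨hfin, ?_⟩
  have h1 : (strip δ k).ncard ≤ F.card := by
    have := Set.ncard_le_ncard hsub F.finite_toSet
    simpa [Set.ncard_coe_finset] using this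
  have h2 : F.card ≤ (Finset.Icc (0:ℤ) ⌊(k:ℝ)/δ⌋).card := Finset.card_image_le
  have h3 : (Finset.Icc (0:ℤ) ⌊(k:ℝ)/δ⌋).card = (⌊(k:ℝ)/δ⌋ + 1).toNat := by
    rw [Int.card_Icc]; ring_nf
  have hfl : (0:ℤ) ≤ ⌊(k:ℝ)/δ⌋ := Int.floor_nonneg.mpr (by positivity)
  have h4 : (((⌊(k:ℝ)/δ⌋ + 1).toNat : ℤ) : ℝ) ≤ (k:ℝ)/δ + 1 := by
    rw [Int.toNat_of_nonneg (by omega)]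
    push_cast
    have := Int.floor_le ((k:ℝ)/δ)
    linarith
  calc ((strip δ k).ncard : ℝ) ≤ (F.card : ℝ) := by exact_mod_cast h1
    _ ≤ (((⌊(k:ℝ)/δ⌋ + 1).toNat : ℤ) : ℝ) := by exact_mod_cast h2.trans h3.le
    _ ≤ (k:ℝ)/δ + 1 := h4

private lemma prod_step {N : ℕ} {T : ℝ} (hT : 0 ≤ T) {f g : ℕ → ℝ}
    (hf : ∀ k ∈ Finset.Icc 1 N, 0 ≤ f k) (hfg : ∀ k ∈ Finset.Icc 1 N, f k ≤ g k)
    {k₀ : ℕ} (hk₀ : k₀ ∈ Finset.Icc 1 N) (h : T * f k₀ ≤ g k₀) :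
    T * ∏ k ∈ Finset.Icc 1 N, f k ≤ ∏ k ∈ Finset.Icc 1 N, g k := by
  rw [← Finset.mul_prod_erase _ f hk₀, ← Finset.mul_prod_erase _ g hk₀, ← mul_assoc]
  refine mul_le_mul h (Finset.prod_le_prod ?_ ?_) (Finset.prod_nonneg ?_)
    (le_trans (mul_nonneg hT (hf k₀ hk₀)) h)
  · intro i hi; exact hf i (Finset.mem_of_mem_erase hi)
  · intro i hi; exact hfg i (Finset.mem_of_mem_erase hi)
  · intro i hi; exact hf i (Finset.mem_of_mem_erase hi)

/-- Lemma 2.5: existence of tight subsets. -/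
theorem stmt6 (δ τ : ℝ) (hδ : isDyadic δ) (hτ : 0 < τ) (N : ℕ) (hN : 2 ≤ N)
    (A : Set ℝ) (hA : A ⊆ grid δ)
    (hcard : δ ^ (-((N : ℝ) ^ 2 * τ)) ≤ (A.ncard : ℝ)) :
    ∃ A' ⊆ A, isTight δ τ (2 * δ ^ (-(1 / (N : ℝ)))) N A' ∧
      δ ^ ((N : ℝ) ^ 2 * τ) * (A.ncard : ℝ) ≤ (A'.ncard : ℝ) := by
  classical
  obtain ⟨jd, hjd⟩ := hδ
  have hδ0 : 0 < δ := by rw [hjd]; positivity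
  have hδ1 : δ ≤ 1 := by
    rw [hjd]
    calc (2:ℝ) ^ (-(jd:ℤ)) ≤ 2 ^ (0:ℤ) :=
      zpow_le_zpow_right₀ one_le_two (by omega)
    _ = 1 := by norm_num
  have hNpos : (0:ℝ) < (N:ℝ) := by positivity
  have hA0 : (0:ℝ) < (A.ncard : ℝ) := lt_of_lt_of_le (Real.rpow_pos_of_pos hδ0 _) hcard
  have hA1 : A ⊆ strip δ 1 := by
    intro x hx
    obtain ⟨h1, h2⟩ := hA hx
    exact ⟨h1, by simpa using h2⟩
  have hfinB : ∀ (B : Set ℝ), B ⊆ A → ∀ k, (sumN k B).Finite :=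
    fun B hB k => ((strip_finite hδ0 k).1).subset (sumN_strip (hB.trans hA1) k)
  set T := 2 * δ ^ (-(1 / (N : ℝ))) with hT
  have hTpos : 0 < T := by
    rw [hT]; positivity
  have main : ∀ j : ℕ, j ≤ N^2+1 →
      (∃ A' ⊆ A, isTight δ τ T N A' ∧
        δ ^ ((N:ℝ)^2*τ) * (A.ncard:ℝ) ≤ (A'.ncard:ℝ)) ∨
      (∃ A', A' ⊆ A ∧ δ ^ ((j:ℝ)*τ) * (A.ncard:ℝ) ≤ (A'.ncard:ℝ) ∧
        T^j * ∏ k ∈ Finset.Icc 1 N, ((sumN k A').ncard:ℝ)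
          ≤ ∏ k ∈ Finset.Icc 1 N, ((sumN k A).ncard:ℝ)) := by
    intro j
    induction j with
    | zero =>
        intro _
        right
        exact ⟨A, subset_rfl, by simp, by simp⟩
    | succ j IH =>
        intro hj
        rcases IH (by omega) with h | ⟨A', hA'A, hA'card, hA'P⟩
        · exact Or.inl h
        by_cases htight : isTight δ τ T N A'
        · left
          refine ⟨A', hA'A, htight, ?_⟩
          have hexp : δ ^ ((N:ℝ)^2*τ) ≤ δ ^ ((j:ℝ)*τ) := by
            apply Real.rpow_le_rpow_of_exponent_ge hδ0 hδ1
            have hjN : (j:ℝ) ≤ (N:ℝ)^2 := by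
              have hle : j ≤ N^2 := by omega
              calc (j:ℝ) ≤ ((N^2:ℕ):ℝ) := by exact_mod_cast hle
                _ = (N:ℝ)^2 := by push_cast; ring
            nlinarith
          calc δ ^ ((N:ℝ)^2*τ) * (A.ncard:ℝ) ≤ δ ^ ((j:ℝ)*τ) * (A.ncard:ℝ) :=
              mul_le_mul_of_nonneg_right hexp hA0.le
            _ ≤ (A'.ncard:ℝ) := hA'card
        · right
          rw [isTight] at htight
          push_neg at htight
          obtain ⟨A'', hA''sub, hA''card, k₀, hk₀1, hk₀N, hk₀⟩ := htight
          refine ⟨A'', hA''sub.trans hA'A, ?_, ?_⟩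
          · have hstep : δ ^ τ * (δ ^ ((j:ℝ)*τ) * (A.ncard:ℝ)) ≤ δ ^ τ * (A'.ncard:ℝ) :=
              mul_le_mul_of_nonneg_left hA'card (Real.rpow_nonneg hδ0.le _)
            have heq : δ ^ (((j:ℝ)+1)*τ) = δ ^ τ * δ ^ ((j:ℝ)*τ) := by
              rw [← Real.rpow_add hδ0]; ring_nf
            calc δ ^ (((j+1:ℕ):ℝ)*τ) * (A.ncard:ℝ)
                = δ ^ τ * (δ ^ ((j:ℝ)*τ) * (A.ncard:ℝ)) := by
                  push_cast
                  rw [heq]; ring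
              _ ≤ δ ^ τ * (A'.ncard:ℝ) := hstep
              _ ≤ (A''.ncard:ℝ) := hA''card
          · have h1 : T * ∏ k ∈ Finset.Icc 1 N, ((sumN k A'').ncard:ℝ)
                ≤ ∏ k ∈ Finset.Icc 1 N, ((sumN k A').ncard:ℝ) := by
              refine prod_step hTpos.le (fun k _ => by positivity) ?_
                (Finset.mem_Icc.mpr ⟨hk₀1, hk₀N⟩) hk₀.le
              intro k _
              exact_mod_cast Nat.cast_le.mpr
                (Set.ncard_le_ncard (sumN_mono hA''sub k) (hfinB A' hA'A k))
            calc T^(j+1) * ∏ k ∈ Finset.Icc 1 N, ((sumN k A'').ncard:ℝ)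
                = T^j * (T * ∏ k ∈ Finset.Icc 1 N, ((sumN k A'').ncard:ℝ)) := by ring
              _ ≤ T^j * ∏ k ∈ Finset.Icc 1 N, ((sumN k A').ncard:ℝ) :=
                  mul_le_mul_of_nonneg_left h1 (pow_nonneg hTpos.le _)
              _ ≤ ∏ k ∈ Finset.Icc 1 N, ((sumN k A).ncard:ℝ) := hA'P
  rcases main (N^2+1) le_rfl with h | ⟨A', hA'A, hA'card, hA'P⟩
  · exact h
  exfalso
  set M := N^2+1 with hM
  have hA'ne : A'.Nonempty := by
    apply Set.nonempty_of_ncard_ne_zero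
    have : (0:ℝ) < (A'.ncard:ℝ) :=
      lt_of_lt_of_le (by positivity) hA'card
    exact_mod_cast this.ne'
  have hPA'1 : (1:ℝ) ≤ ∏ k ∈ Finset.Icc 1 N, ((sumN k A').ncard:ℝ) := by
    have := Finset.prod_le_prod (s := Finset.Icc 1 N) (f := fun _ => (1:ℝ))
      (g := fun k => ((sumN k A').ncard:ℝ)) (by intros; norm_num)
      (fun k _ => by
        have h7 : 0 < (sumN k A').ncard :=
          (Set.ncard_pos (hfinB A' hA'A k)).mpr (sumN_nonempty hA'ne k)
        show (1:ℝ) ≤ ((sumN k A').ncard:ℝ)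
        exact_mod_cast h7)
    simpa using this
  have h2 : T^M ≤ ∏ k ∈ Finset.Icc 1 N, ((sumN k A).ncard:ℝ) := by
    calc T^M = T^M * 1 := by ring
      _ ≤ T^M * ∏ k ∈ Finset.Icc 1 N, ((sumN k A').ncard:ℝ) :=
          mul_le_mul_of_nonneg_left hPA'1 (pow_nonneg hTpos.le _)
      _ ≤ _ := hA'P
  have h3 : ∏ k ∈ Finset.Icc 1 N, ((sumN k A).ncard:ℝ) ≤ (((N:ℝ)+1)/δ)^N := by
    have hb : ∀ k ∈ Finset.Icc 1 N, ((sumN k A).ncard:ℝ) ≤ ((N:ℝ)+1)/δ := by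
      intro k hk
      obtain ⟨hk1, hkN⟩ := Finset.mem_Icc.mp hk
      have hc := Set.ncard_le_ncard (sumN_strip hA1 k) (strip_finite hδ0 k).1
      have hd := (strip_finite hδ0 k).2
      have he : (k:ℝ)/δ + 1 ≤ ((N:ℝ)+1)/δ := by
        rw [div_add' _ _ _ hδ0.ne', div_le_div_iff₀ hδ0 hδ0]
        have : (k:ℝ) ≤ (N:ℝ) := by exact_mod_cast hkN
        nlinarith
      calc ((sumN k A).ncard:ℝ) ≤ ((strip δ k).ncard:ℝ) := by exact_mod_cast hc
        _ ≤ (k:ℝ)/δ + 1 := hd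
        _ ≤ ((N:ℝ)+1)/δ := he
    calc ∏ k ∈ Finset.Icc 1 N, ((sumN k A).ncard:ℝ)
        ≤ ∏ _k ∈ Finset.Icc 1 N, (((N:ℝ)+1)/δ) :=
          Finset.prod_le_prod (fun k _ => by positivity) hb
      _ = (((N:ℝ)+1)/δ)^N := by
          simp [Finset.prod_const, Nat.card_Icc, div_pow]
  have h4 : (((N:ℝ)+1)/δ)^N < T^M := by
    have hL : (((N:ℝ)+1)/δ)^N = ((N:ℝ)+1)^N * δ^(-(N:ℝ)) := by
      rw [div_pow, Real.rpow_neg hδ0.le, Real.rpow_natCast, div_eq_mul_inv]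
    have hR : T^M = 2^M * δ^(-(1/(N:ℝ)) * (M:ℝ)) := by
      rw [hT, mul_pow, ← Real.rpow_natCast (δ^(-(1/(N:ℝ)))) M, ← Real.rpow_mul hδ0.le]
    have hM' : (N:ℝ)*(N:ℝ) ≤ (M:ℝ) := by
      rw [hM]; push_cast; nlinarith
    have hexp : -(1/(N:ℝ))*(M:ℝ) ≤ -(N:ℝ) := by
      have h5 : (N:ℝ) ≤ (M:ℝ)/(N:ℝ) := (le_div_iff₀ hNpos).mpr hM'
      have h6 : (1/(N:ℝ))*(M:ℝ) = (M:ℝ)/(N:ℝ) := by ring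
      linarith
    have hδN : δ^(-(N:ℝ)) ≤ δ^(-(1/(N:ℝ)) * (M:ℝ)) :=
      Real.rpow_le_rpow_of_exponent_ge hδ0 hδ1 hexp
    have hnumN : (N+1)^N < 2^M := by
      calc (N+1)^N ≤ (2^N)^N := Nat.pow_le_pow_left (Nat.succ_le_of_lt N.lt_two_pow_self) N
        _ = 2^(N*N) := (pow_mul 2 N N).symm
        _ < 2^M := by
            apply Nat.pow_lt_pow_right one_lt_two
            have : N*N = N^2 := by ring
            omega
    have hnum : ((N:ℝ)+1)^N < (2:ℝ)^M := by
      exact_mod_cast hnumN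
    calc (((N:ℝ)+1)/δ)^N = ((N:ℝ)+1)^N * δ^(-(N:ℝ)) := hL
      _ < (2:ℝ)^M * δ^(-(N:ℝ)) :=
          mul_lt_mul_of_pos_right hnum (Real.rpow_pos_of_pos hδ0 _)
      _ ≤ (2:ℝ)^M * δ^(-(1/(N:ℝ)) * (M:ℝ)) :=
          mul_le_mul_of_nonneg_left hδN (by positivity)
      _ = T^M := hR.symm
  exact absurd (h2.trans h3) (not_le.mpr h4)
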